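/- For q ∈ [q_1, q_3] and all j ≥ 1, the point y_j = Π(0 1^j (10)^∞) lies in the interval [(q+q^2)/(q^4-1), 1/(q^2-q)]. -/

import Mathlib

/-- `y q j = Π(0 1^j (10)^∞)`: digit 0, then j ones, then (10) repeated. -/
noncomputable def yExp (q : ℝ) (j : ℕ) : ℝ :=
  ∑' i : ℕ, (if i = 0 then (0:ℝ) else if i ≤ j then 1
    else if (i - (j + 1)) % 2 = 0 then 1 else 0) / q ^ (i + 1)

/-- `z q j = Π(1 0^j (01)^∞)`: digit 1, then j zeros, then (01) repeated. -/
noncomputable def zExp (q : ℝ) (j : ℕ) : ℝ :=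
  ∑' i : ℕ, (if i = 0 then (1:ℝ) else if i ≤ j then 0
    else if (i - (j + 1)) % 2 = 0 then 0 else 1) / q ^ (i + 1)

lemma val_aux (q p : ℝ) (hq : 1 < q) (hp0 : 0 < p) :
    q⁻¹ ^ 2 * ((p⁻¹ - 1) / (q⁻¹ - 1)) + p⁻¹ * q⁻¹ ^ 2 * (1 - q⁻¹ ^ 2)⁻¹
      = (p * q + p - 1) / (p * q * (q ^ 2 - 1)) := by
  have hq0 : 0 < q := by linarith
  have n1 : q ≠ 0 := hq0.ne'
  have n2 : p ≠ 0 := hp0.ne'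
  have n3 : q - 1 ≠ 0 := by intro h; nlinarith
  have n4 : q ^ 2 - 1 ≠ 0 := by intro h; nlinarith
  have n5 : (1:ℝ) - q ≠ 0 := by intro h; nlinarith
  have n6 : p * q ^ 2 - p * q ^ 3 ≠ 0 := by
    intro h
    have h2 : p * q ^ 2 * (1 - q) = 0 := by nlinarith
    have h3 : 0 < p * q ^ 2 := by positivity
    exact (mul_ne_zero h3.ne' n5) h2
  field_simp
  ring

lemma pos_aux (q p : ℝ) (hq : 1 < q) (hqp : q ≤ p) : 0 < p * q * (q ^ 2 - 1) := by
  have hq0 : 0 < q := by linarith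
  have hp0 : 0 < p := by linarith
  have h1 : 0 < q ^ 2 - 1 := by nlinarith
  have := mul_pos (mul_pos hp0 hq0) h1
  linarith

lemma bounds_aux (q p : ℝ) (hq : 1 < q) (hqp : q ≤ p) :
    (q + q^2) / (q^4 - 1) ≤ (p * q + p - 1) / (p * q * (q ^ 2 - 1))
    ∧ (p * q + p - 1) / (p * q * (q ^ 2 - 1)) ≤ 1 / (q^2 - q) := by
  have hq0 : 0 < q := by linarith
  have hp0 : 0 < p := by linarith
  have hq2 : (1:ℝ) < q ^ 2 := by nlinarith
  have hq4 : (1:ℝ) < q ^ 4 := by nlinarith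
  constructor
  · rw [div_le_div_iff₀ (by nlinarith) (pos_aux q p hq hqp)]
    have key : 0 < p * q + p - q ^ 2 - 1 := by nlinarith
    nlinarith [mul_pos (show (0:ℝ) < q ^ 2 - 1 by nlinarith) key]
  · rw [div_le_div_iff₀ (pos_aux q p hq hqp) (by nlinarith)]
    nlinarith [mul_pos hq0 (show (0:ℝ) < q - 1 by linarith)]

lemma yExp_closed (q : ℝ) (hq' : 1 < q) (j : ℕ) :
    yExp q j = q⁻¹ ^ 2 * ((q⁻¹ ^ j - 1) / (q⁻¹ - 1))
      + q⁻¹ ^ (j + 2) * (1 - q⁻¹ ^ 2)⁻¹ := by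
  have hq0 : 0 < q := by linarith
  set r : ℝ := q⁻¹ with hr
  have hr0 : 0 < r := by positivity
  have hr1 : r < 1 := inv_lt_one_of_one_lt₀ hq'
  set f : ℕ → ℝ := fun i => (if i = 0 then (0:ℝ) else if i ≤ j then 1
    else if (i - (j + 1)) % 2 = 0 then 1 else 0) / q ^ (i + 1) with hf
  have hfr : ∀ i, f i = (if i = 0 then (0:ℝ) else if i ≤ j then 1
      else if (i - (j + 1)) % 2 = 0 then 1 else 0) * r ^ (i + 1) := by
    intro i
    simp only [hf]
    rw [div_eq_mul_inv, ← inv_pow]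
  have hfle : ∀ i, f i ≤ r * r ^ i := by
    intro i
    rw [hfr i, pow_succ']
    have h1 : (if i = 0 then (0:ℝ) else if i ≤ j then 1
        else if (i - (j + 1)) % 2 = 0 then 1 else 0) ≤ 1 := by
      split_ifs <;> norm_num
    have h0 : (0:ℝ) ≤ (if i = 0 then (0:ℝ) else if i ≤ j then 1
        else if (i - (j + 1)) % 2 = 0 then 1 else 0) := by
      split_ifs <;> norm_num
    nlinarith [mul_pos hr0 (pow_pos hr0 i)]
  have hfnn : ∀ i, 0 ≤ f i := by
    intro i
    rw [hfr i]
    have : (0:ℝ) ≤ r ^ (i + 1) := by positivity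
    split_ifs <;> nlinarith
  have hsum : Summable f :=
    Summable.of_nonneg_of_le hfnn hfle ((summable_geometric_of_lt_one hr0.le hr1).mul_left r)
  have heven : ∑' i : ℕ, (if i % 2 = 0 then (1:ℝ) else 0) * r ^ i = (1 - r ^ 2)⁻¹ := by
    have hinj : Function.Injective (fun k : ℕ => 2 * k) := by
      intro a b h
      dsimp only at h
      omega
    have hsupp : Function.support (fun i : ℕ => (if i % 2 = 0 then (1:ℝ) else 0) * r ^ i)
        ⊆ Set.range (fun k : ℕ => 2 * k) := by
      intro i hi
      simp only [Function.mem_support] at hi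
      rcases Nat.even_or_odd i with he | ho
      · have h2 := Nat.even_iff.mp he
        exact ⟨i / 2, by dsimp only; omega⟩
      · exfalso
        apply hi
        have h2 := Nat.odd_iff.mp ho
        simp [h2]
    rw [← hinj.tsum_eq hsupp]
    have hterm : ∀ k : ℕ, (if (2 * k) % 2 = 0 then (1:ℝ) else 0) * r ^ (2 * k)
        = (r ^ 2) ^ k := by
      intro k
      simp [Nat.mul_mod_right, pow_mul]
    simp only [hterm]
    exact tsum_geometric_of_lt_one (by positivity) (by nlinarith)
  have htail : ∑' i : ℕ, f (i + (j + 1)) = r ^ (j + 2) * (1 - r ^ 2)⁻¹ := by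
    have hterm : ∀ i : ℕ, f (i + (j + 1))
        = r ^ (j + 2) * ((if i % 2 = 0 then (1:ℝ) else 0) * r ^ i) := by
      intro i
      rw [hfr]
      have h1 : ¬ (i + (j + 1) = 0) := by omega
      have h2 : ¬ (i + (j + 1) ≤ j) := by omega
      have h3 : i + (j + 1) - (j + 1) = i := by omega
      rw [if_neg h1, if_neg h2, h3]
      rw [show i + (j + 1) + 1 = (j + 2) + i by omega, pow_add]
      split_ifs <;> ring
    simp only [hterm]
    rw [tsum_mul_left, heven]
  have hfin : ∑ i ∈ Finset.range (j + 1), f i = r ^ 2 * ((r ^ j - 1) / (r - 1)) := by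
    rw [Finset.sum_range_succ']
    have h0 : f 0 = 0 := by rw [hfr]; simp
    have h1 : ∀ i ∈ Finset.range j, f (i + 1) = r ^ 2 * r ^ i := by
      intro i hi
      rw [Finset.mem_range] at hi
      rw [hfr]
      have h2 : ¬ (i + 1 = 0) := by omega
      have h3 : i + 1 ≤ j := by omega
      rw [if_neg h2, if_pos h3, one_mul, show i + 1 + 1 = 2 + i by omega, pow_add]
    rw [h0, Finset.sum_congr rfl h1, ← Finset.mul_sum, geom_sum_eq hr1.ne, add_zero]
  have h := (hsum.sum_add_tsum_nat_add (j + 1)).symm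
  rw [hfin, htail] at h
  unfold yExp
  rw [← hf] at h ⊢
  exact h

/-- for q ∈ [q₁,q₃] and j ≥ 1, y_j ∈ [(q+q²)/(q⁴-1), 1/(q²-q)]. -/
theorem yj_in_interval (q1 q3 q : ℝ)
    (hq1 : q1 ∈ Set.Ioo (1:ℝ) 2 ∧ q1^6 - q1^4 - q1^3 - 2*q1^2 - q1 - 1 = 0)
    (hq3 : q3 ∈ Set.Ioo (1:ℝ) 2 ∧ q3^5 - q3^4 - q3^3 - q3 + 1 = 0)
    (hq : q ∈ Set.Icc q1 q3) (j : ℕ) (hj : 1 ≤ j) :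
    yExp q j ∈ Set.Icc ((q + q^2) / (q^4 - 1)) (1 / (q^2 - q)) := by
  have hq' : 1 < q := lt_of_lt_of_le hq1.1.1 hq.1
  have hq0 : 0 < q := by linarith
  have hclosed := yExp_closed q hq' j
  have e1 : q⁻¹ ^ j = (q ^ j)⁻¹ := by rw [inv_pow]
  have e2 : q⁻¹ ^ (j + 2) = (q ^ j)⁻¹ * q⁻¹ ^ 2 := by rw [pow_add, inv_pow]
  rw [e1, e2] at hclosed
  have hpq' : q ≤ q ^ j := by
    calc q = q ^ 1 := (pow_one q).symm
    _ ≤ q ^ j := pow_le_pow_right₀ (by linarith) hj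
  obtain ⟨p, hpdef⟩ : ∃ p : ℝ, q ^ j = p := ⟨_, rfl⟩
  rw [hpdef] at hclosed
  have hpq : q ≤ p := hpdef ▸ hpq'
  have hp0 : 0 < p := by linarith
  rw [val_aux q p hq' hp0] at hclosed
  rw [hclosed]
  exact ⟨(bounds_aux q p hq' hpq).1, (bounds_aux q p hq' hpq).2⟩
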